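/- In the homogeneous case m_x = m for all x, the total current J = Σ_x (ω/√m) π_x · (q_{x+e_1} - q_{x-e_1}) satisfies (λ - L)^{-1} J = J/(λ + γ) for every λ > 0; equivalently, L J = -γ J where L = A + γ S. -/

import Mathlib

open scoped BigOperators

/-- Phase-space configurations `(π, q)` on the discrete torus. -/
abbrev Cfg (d N : ℕ) :=
  ((Fin d → ZMod N) → Fin d → ℝ) × ((Fin d → ZMod N) → Fin d → ℝ)

/-- Partial derivative with respect to `π_x^i`. -/
noncomputable def pderP {d N : ℕ} [NeZero N] (x : Fin d → ZMod N) (i : Fin d)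
    (f : Cfg d N → ℝ) (c : Cfg d N) : ℝ :=
  fderiv ℝ f c (Pi.single x (Pi.single i 1), 0)

/-- Partial derivative with respect to `q_x^i`. -/
noncomputable def pderQ {d N : ℕ} [NeZero N] (x : Fin d → ZMod N) (i : Fin d)
    (f : Cfg d N → ℝ) (c : Cfg d N) : ℝ :=
  fderiv ℝ f c (0, Pi.single x (Pi.single i 1))

/-- The vector field `Y^{i,j}_{x,x+e_k}`, acting on the velocities. -/
noncomputable def Yop {d N : ℕ} [NeZero N] (x : Fin d → ZMod N) (k i j : Fin d)
    (f : Cfg d N → ℝ) (c : Cfg d N) : ℝ :=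
  c.1 (x + Pi.single k 1) j * pderP x i f c - c.1 x i * pderP (x + Pi.single k 1) j f c

/-- The noise generator `S = (1/(2d²)) Σ_{i,j,k} Σ_x (Y^{i,j}_{x,x+e_k})²`. -/
noncomputable def Sop {d N : ℕ} [NeZero N] (f : Cfg d N → ℝ) (c : Cfg d N) : ℝ :=
  (1 / (2 * (d : ℝ) ^ 2)) *
    ∑ i : Fin d, ∑ j : Fin d, ∑ k : Fin d, ∑ x : Fin d → ZMod N,
      Yop x k i j (Yop x k i j f) c

/-- The Hamiltonian vector field
`A = Σ_x { (1/√m_x) π_x ⋅ ∂_{q_x} + (1/√m_x)(ω Δq_x - ν q_x) ⋅ ∂_{π_x} }`. -/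
noncomputable def Aop {d N : ℕ} [NeZero N] (m : (Fin d → ZMod N) → ℝ) (ω ν : ℝ)
    (f : Cfg d N → ℝ) (c : Cfg d N) : ℝ :=
  ∑ x : Fin d → ZMod N, ∑ i : Fin d,
    ((1 / Real.sqrt (m x)) * c.1 x i * pderQ x i f c
      + (1 / Real.sqrt (m x)) *
          (ω * (∑ j, (c.2 (x + Pi.single j 1) i + c.2 (x - Pi.single j 1) i - 2 * c.2 x i))
            - ν * c.2 x i) * pderP x i f c)


set_option linter.unusedSectionVars false

variable {d N : ℕ} [NeZero N]

noncomputable def Pc (x : Fin d → ZMod N) (i : Fin d) : Cfg d N →L[ℝ] ℝ :=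
  ((ContinuousLinearMap.proj i : (Fin d → ℝ) →L[ℝ] ℝ).comp
    ((ContinuousLinearMap.proj x : ((Fin d → ZMod N) → Fin d → ℝ) →L[ℝ] (Fin d → ℝ)).comp
      (ContinuousLinearMap.fst ℝ _ _)))

noncomputable def Qc (x : Fin d → ZMod N) (i : Fin d) : Cfg d N →L[ℝ] ℝ :=
  ((ContinuousLinearMap.proj i : (Fin d → ℝ) →L[ℝ] ℝ).comp
    ((ContinuousLinearMap.proj x : ((Fin d → ZMod N) → Fin d → ℝ) →L[ℝ] (Fin d → ℝ)).comp
      (ContinuousLinearMap.snd ℝ _ _)))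

def Bfun (a : Fin d → ZMod N) (j : Fin d) (u v : Fin d → ZMod N) (i : Fin d)
    (c : Cfg d N) : ℝ := c.1 a j * (c.2 u i - c.2 v i)

noncomputable def Bder (a : Fin d → ZMod N) (j : Fin d) (u v : Fin d → ZMod N) (i : Fin d)
    (c : Cfg d N) : Cfg d N →L[ℝ] ℝ :=
  c.1 a j • (Qc u i - Qc v i) + (c.2 u i - c.2 v i) • Pc a j

lemma hasFDerivAt_B (a : Fin d → ZMod N) (j : Fin d) (u v : Fin d → ZMod N) (i : Fin d)
    (c : Cfg d N) : HasFDerivAt (Bfun a j u v i) (Bder a j u v i c) c :=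
  (Pc a j).hasFDerivAt.mul (((Qc u i).hasFDerivAt).sub ((Qc v i).hasFDerivAt))

lemma Bder_applyP (a : Fin d → ZMod N) (j : Fin d) (u v : Fin d → ZMod N) (i : Fin d)
    (c : Cfg d N) (y : Fin d → ZMod N) (l : Fin d) :
    Bder a j u v i c (Pi.single y (Pi.single l 1), 0)
      = (if a = y ∧ j = l then c.2 u i - c.2 v i else 0) := by
  simp only [Bder, ContinuousLinearMap.add_apply, ContinuousLinearMap.smul_apply,
    ContinuousLinearMap.sub_apply]
  have hP : Pc a j ((Pi.single y (Pi.single l 1) :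
      (Fin d → ZMod N) → Fin d → ℝ), (0 : (Fin d → ZMod N) → Fin d → ℝ))
      = if a = y ∧ j = l then 1 else 0 := by
    show (Pi.single y (Pi.single l 1) : (Fin d → ZMod N) → Fin d → ℝ) a j = _
    rcases eq_or_ne a y with h | h <;> rcases eq_or_ne j l with h2 | h2 <;>
      simp [h, h2, Pi.single_apply]
  have hQ : ∀ w : Fin d → ZMod N, Qc w i ((Pi.single y (Pi.single l 1) :
      (Fin d → ZMod N) → Fin d → ℝ), (0 : (Fin d → ZMod N) → Fin d → ℝ)) = 0 := by
    intro w; rfl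
  rw [hP, hQ, hQ]
  rcases eq_or_ne a y with h | h <;> rcases eq_or_ne j l with h2 | h2 <;>
    simp [h, h2, mul_comm]

lemma Bder_applyQ (a : Fin d → ZMod N) (j : Fin d) (u v : Fin d → ZMod N) (i : Fin d)
    (c : Cfg d N) (y : Fin d → ZMod N) (l : Fin d) :
    Bder a j u v i c (0, Pi.single y (Pi.single l 1))
      = c.1 a j * ((if u = y ∧ i = l then (1:ℝ) else 0) - (if v = y ∧ i = l then 1 else 0)) := by
  simp only [Bder, ContinuousLinearMap.add_apply, ContinuousLinearMap.smul_apply,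
    ContinuousLinearMap.sub_apply]
  have hP : Pc a j ((0 : (Fin d → ZMod N) → Fin d → ℝ), (Pi.single y (Pi.single l 1) :
      (Fin d → ZMod N) → Fin d → ℝ)) = 0 := rfl
  have hQ : ∀ w : Fin d → ZMod N, Qc w i ((0 : (Fin d → ZMod N) → Fin d → ℝ),
      (Pi.single y (Pi.single l 1) : (Fin d → ZMod N) → Fin d → ℝ))
      = if w = y ∧ i = l then 1 else 0 := by
    intro w
    show (Pi.single y (Pi.single l 1) : (Fin d → ZMod N) → Fin d → ℝ) w i = _
    rcases eq_or_ne w y with h | h <;> rcases eq_or_ne i l with h2 | h2 <;>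
      simp [h, h2, Pi.single_apply]
  rw [hP, hQ, hQ]
  simp [smul_eq_mul]

/-- the current -/
noncomputable def Jf (κ : ℝ) (e : Fin d → ZMod N) (c : Cfg d N) : ℝ :=
  ∑ x, κ * ∑ i, c.1 x i * (c.2 (x + e) i - c.2 (x - e) i)

lemma hasFDerivAt_J (κ : ℝ) (e : Fin d → ZMod N) (c : Cfg d N) :
    HasFDerivAt (Jf κ e)
      (∑ x : Fin d → ZMod N, κ • ∑ i, Bder x i (x + e) (x - e) i c) c := by
  apply HasFDerivAt.fun_sum
  intro x _
  exact (HasFDerivAt.fun_sum fun i _ => hasFDerivAt_B x i (x + e) (x - e) i c).const_mul κ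

lemma pderP_J (κ : ℝ) (e : Fin d → ZMod N) (c : Cfg d N) (y : Fin d → ZMod N) (l : Fin d) :
    pderP y l (Jf κ e) c = κ * (c.2 (y + e) l - c.2 (y - e) l) := by
  rw [pderP, (hasFDerivAt_J κ e c).fderiv]
  simp only [ContinuousLinearMap.sum_apply, ContinuousLinearMap.smul_apply, Bder_applyP,
    smul_eq_mul]
  simp [ite_and, Finset.sum_ite_eq, Finset.sum_ite_eq']

lemma pderQ_J (κ : ℝ) (e : Fin d → ZMod N) (c : Cfg d N) (y : Fin d → ZMod N) (l : Fin d) :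
    pderQ y l (Jf κ e) c = κ * (c.1 (y - e) l - c.1 (y + e) l) := by
  rw [pderQ, (hasFDerivAt_J κ e c).fderiv]
  simp only [ContinuousLinearMap.sum_apply, ContinuousLinearMap.smul_apply, Bder_applyQ,
    smul_eq_mul]
  have h1 : ∀ x : Fin d → ZMod N, (x + e = y) ↔ (x = y - e) := fun x => eq_sub_iff_add_eq.symm
  have h2 : ∀ x : Fin d → ZMod N, (x - e = y) ↔ (x = y + e) := fun x => sub_eq_iff_eq_add
  simp only [h1, h2, mul_sub, mul_ite, mul_one, mul_zero]
  rw [← Finset.mul_sum]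
  rw [← mul_sub κ]
  congr 1
  rw [Finset.sum_comm]
  simp only [Finset.sum_sub_distrib]
  congr 1 <;> simp [ite_and, Finset.sum_ite_eq, Finset.sum_ite_eq']

lemma shift_sum (f : (Fin d → ZMod N) → ℝ) (a : Fin d → ZMod N) :
    ∑ x, f (x + a) = ∑ x, f x :=
  Fintype.sum_equiv (Equiv.addRight a) _ _ (fun _ => rfl)

lemma L2 (Q : (Fin d → ZMod N) → ℝ) (a b : Fin d → ZMod N) :
    ∑ x, Q (x + a) * Q (x + b) = ∑ x, Q (x - a) * Q (x - b) := by
  apply Fintype.sum_equiv (Equiv.addRight (a + b))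
  intro x
  have h1 : x + (a + b) - a = x + b := by abel
  have h2 : x + (a + b) - b = x + a := by abel
  show Q (x + a) * Q (x + b) = Q (x + (a + b) - a) * Q (x + (a + b) - b)
  rw [h1, h2, mul_comm]

lemma cor1 (Q : (Fin d → ZMod N) → ℝ) (e : Fin d → ZMod N) :
    ∑ x, Q x * Q (x + e) = ∑ x, Q x * Q (x - e) := by
  have := L2 Q 0 e
  simpa using this

lemma cor2 (Q : (Fin d → ZMod N) → ℝ) (b e : Fin d → ZMod N) :
    ∑ x, Q (x + b) * Q (x - e) = ∑ x, Q (x - b) * Q (x + e) := by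
  have := L2 Q b (-e)
  simpa [sub_neg_eq_add, ← sub_eq_add_neg] using this

lemma lap_zero (Q : (Fin d → ZMod N) → ℝ) (b e : Fin d → ZMod N) :
    ∑ x, (Q (x + b) + Q (x - b) - 2 * Q x) * (Q (x + e) - Q (x - e)) = 0 := by
  have expand : ∀ x, (Q (x + b) + Q (x - b) - 2 * Q x) * (Q (x + e) - Q (x - e))
      = (Q (x + b) * Q (x + e) - Q (x - b) * Q (x - e))
        - (Q (x + b) * Q (x - e) - Q (x - b) * Q (x + e))
        - 2 * (Q x * Q (x + e) - Q x * Q (x - e)) := by intro x; ring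
  simp only [expand]
  rw [Finset.sum_sub_distrib, Finset.sum_sub_distrib, Finset.sum_sub_distrib,
    Finset.sum_sub_distrib, ← Finset.mul_sum, Finset.sum_sub_distrib]
  rw [L2 Q b e, cor2 Q b e, cor1 Q e]
  ring


lemma inner_zero (s κ ω ν : ℝ) (e : Fin d → ZMod N) (p Q : (Fin d → ZMod N) → ℝ) :
    ∑ x, (s * p x * (κ * (p (x - e) - p (x + e)))
      + s * (ω * (∑ j, (Q (x + Pi.single j 1) + Q (x - Pi.single j 1) - 2 * Q x)) - ν * Q x)
          * (κ * (Q (x + e) - Q (x - e)))) = 0 := by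
  have hsplit : ∀ x : Fin d → ZMod N,
      s * p x * (κ * (p (x - e) - p (x + e)))
      + s * (ω * (∑ j, (Q (x + Pi.single j 1) + Q (x - Pi.single j 1) - 2 * Q x)) - ν * Q x)
          * (κ * (Q (x + e) - Q (x - e)))
      = (s * κ) * (p x * (p (x - e) - p (x + e)))
        + (∑ j, (s * κ * ω) * ((Q (x + Pi.single j 1) + Q (x - Pi.single j 1) - 2 * Q x)
            * (Q (x + e) - Q (x - e))))
        - (s * κ * ν) * (Q x * (Q (x + e) - Q (x - e))) := by
    intro x
    have h : ∑ j, (s * κ * ω) * ((Q (x + Pi.single j 1) + Q (x - Pi.single j 1) - 2 * Q x)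
            * (Q (x + e) - Q (x - e)))
        = (s * κ * ω) * ((∑ j, (Q (x + Pi.single j 1) + Q (x - Pi.single j 1) - 2 * Q x))
            * (Q (x + e) - Q (x - e))) := by
      rw [Finset.sum_mul, Finset.mul_sum]
    rw [h]; ring
  simp only [hsplit]
  rw [Finset.sum_sub_distrib, Finset.sum_add_distrib, ← Finset.mul_sum, ← Finset.mul_sum,
    Finset.sum_comm]
  have h1 : ∑ x, p x * (p (x - e) - p (x + e)) = 0 := by
    simp only [mul_sub]
    rw [Finset.sum_sub_distrib, ← cor1 p e, sub_self]
  have h3 : ∑ x, Q x * (Q (x + e) - Q (x - e)) = 0 := by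
    simp only [mul_sub]
    rw [Finset.sum_sub_distrib, cor1 Q e, sub_self]
  have h2 : ∀ j : Fin d, ∑ x, (s * κ * ω) * ((Q (x + Pi.single j 1) + Q (x - Pi.single j 1)
      - 2 * Q x) * (Q (x + e) - Q (x - e))) = 0 := by
    intro j
    rw [← Finset.mul_sum, lap_zero Q (Pi.single j 1) e, mul_zero]
  rw [h1, h3]
  simp [h2]

lemma AJ_zero (mm ω ν κ : ℝ) (e : Fin d → ZMod N) (c : Cfg d N) :
    Aop (fun _ => mm) ω ν (Jf κ e) c = 0 := by
  unfold Aop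
  simp only [pderP_J, pderQ_J]
  rw [Finset.sum_comm]
  apply Finset.sum_eq_zero
  intro i _
  exact inner_zero (1 / Real.sqrt mm) κ ω ν e (fun x => c.1 x i) (fun x => c.2 x i)



lemma pderP_GB (κ : ℝ) (a b u v u' v' : Fin d → ZMod N) (j i : Fin d) (c : Cfg d N)
    (y : Fin d → ZMod N) (l : Fin d) :
    pderP y l (fun c' => κ * Bfun a j u v i c' - κ * Bfun b i u' v' j c') c
      = κ * (if a = y ∧ j = l then c.2 u i - c.2 v i else 0)
        - κ * (if b = y ∧ i = l then c.2 u' j - c.2 v' j else 0) := by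
  rw [pderP, (((hasFDerivAt_B a j u v i c).const_mul κ).fun_sub
    ((hasFDerivAt_B b i u' v' j c).const_mul κ)).fderiv]
  simp [Bder_applyP]

lemma Y2J (κ : ℝ) (e : Fin d → ZMod N) (h1 : (1 : ZMod N) ≠ 0) (c : Cfg d N)
    (x : Fin d → ZMod N) (k i j : Fin d) :
    Yop x k i j (Yop x k i j (Jf κ e)) c
      = -κ * (c.1 (x + Pi.single k 1) j
            * (c.2 (x + Pi.single k 1 + e) j - c.2 (x + Pi.single k 1 - e) j)
          + c.1 x i * (c.2 (x + e) i - c.2 (x - e) i)) := by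
  have h0 : (Pi.single k 1 : Fin d → ZMod N) ≠ 0 := by
    intro h
    exact h1 (by simpa using congrFun h k)
  have hfun : Yop x k i j (Jf κ e)
      = fun c' => κ * Bfun (x + Pi.single k 1) j (x + e) (x - e) i c'
          - κ * Bfun x i (x + Pi.single k 1 + e) (x + Pi.single k 1 - e) j c' := by
    funext c'
    unfold Yop Bfun
    rw [pderP_J, pderP_J]
    ring
  rw [hfun]
  unfold Yop
  rw [pderP_GB, pderP_GB]
  simp only [add_eq_left, left_eq_add, h0, false_and, and_self, if_true, if_false,
    and_true, if_neg h0]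
  ring

lemma SJ (κ : ℝ) (e : Fin d → ZMod N) (hd : 0 < d) (h1 : (1 : ZMod N) ≠ 0) (c : Cfg d N) :
    Sop (Jf κ e) c = -(Jf κ e c) := by
  set t : Fin d → ℝ := fun i => ∑ x, c.1 x i * (c.2 (x + e) i - c.2 (x - e) i) with ht
  have h4 : ∀ (i j k : Fin d), ∑ x, Yop x k i j (Yop x k i j (Jf κ e)) c = -κ * (t j + t i) := by
    intro i j k
    simp only [Y2J κ e h1 c]
    rw [← Finset.mul_sum, Finset.sum_add_distrib]
    rw [shift_sum (fun x => c.1 x j * (c.2 (x + e) j - c.2 (x - e) j)) (Pi.single k 1)]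
  unfold Sop
  simp only [h4]
  have hbig : ∑ i : Fin d, ∑ j : Fin d, ∑ k : Fin d, (-κ * (t j + t i))
      = -κ * (2 * (d : ℝ) ^ 2 * ∑ i, t i) := by
    simp only [Finset.sum_const, Finset.card_univ, Fintype.card_fin, nsmul_eq_mul, mul_add,
      Finset.sum_add_distrib, ← Finset.mul_sum]
    ring
  rw [hbig]
  have hJ : Jf κ e c = κ * ∑ i, t i := by
    unfold Jf
    rw [← Finset.mul_sum, Finset.sum_comm]
  rw [hJ]
  have hd' : (d : ℝ) ≠ 0 := Nat.cast_ne_zero.mpr hd.ne'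
  field_simp


/-- in the homogeneous case `m_x = m`, the total current
`J = (ω/√m) Σ_x π_x ⋅ (q_{x+e_1} - q_{x-e_1})` satisfies `L J = -γ J`
where `L = A + γ S`; equivalently `(λ - L)^{-1} J = J/(λ+γ)` for all `λ > 0`. -/
theorem LJ_eq_neg_gamma_J (d N : ℕ) [NeZero N] (hd : 0 < d) (hN : 3 ≤ N)
    (m ω ν γ : ℝ) (hm : 0 < m) (hω : 0 < ω) (hν : 0 < ν) (hγ : 0 < γ) :
    ∀ c : Cfg d N,
      Aop (fun _ => m) ω ν
          (fun c : Cfg d N => ∑ x, (ω / Real.sqrt m) *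
            ∑ i, c.1 x i * (c.2 (x + Pi.single (⟨0, hd⟩ : Fin d) 1) i
                              - c.2 (x - Pi.single (⟨0, hd⟩ : Fin d) 1) i)) c
        + γ * Sop (fun c : Cfg d N => ∑ x, (ω / Real.sqrt m) *
            ∑ i, c.1 x i * (c.2 (x + Pi.single (⟨0, hd⟩ : Fin d) 1) i
                              - c.2 (x - Pi.single (⟨0, hd⟩ : Fin d) 1) i)) c
      = -γ * (∑ x, (ω / Real.sqrt m) *
            ∑ i, c.1 x i * (c.2 (x + Pi.single (⟨0, hd⟩ : Fin d) 1) i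
                              - c.2 (x - Pi.single (⟨0, hd⟩ : Fin d) 1) i)) := by
  intro c
  have h1 : (1 : ZMod N) ≠ 0 := by
    haveI : Fact (1 < N) := ⟨by omega⟩
    exact one_ne_zero
  have hA := AJ_zero (d := d) (N := N) m ω ν (ω / Real.sqrt m)
    (Pi.single (⟨0, hd⟩ : Fin d) 1) c
  have hS := SJ (ω / Real.sqrt m) (Pi.single (⟨0, hd⟩ : Fin d) 1) hd h1 c
  show Aop (fun _ => m) ω ν (Jf (ω / Real.sqrt m) (Pi.single (⟨0, hd⟩ : Fin d) 1)) c
      + γ * Sop (Jf (ω / Real.sqrt m) (Pi.single (⟨0, hd⟩ : Fin d) 1)) c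
    = -γ * (Jf (ω / Real.sqrt m) (Pi.single (⟨0, hd⟩ : Fin d) 1) c)
  rw [hA, hS]
  ring
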